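/- Suppose a differentiable function Θ : ℝ → ℝ satisfies: Θ'(t) ≥ κ > 0 for t in a union of intervals of total length at least T within each period, and Θ'(t) ≥ −M on complementary intervals each of length at most kε. If kεM < (T/2)κ and a' < b with b − a' < (κ/2)T, then a trajectory entering with Θ ≥ a' at the start of a good interval satisfies Θ ≥ a' at all subsequent times and returns to Θ ≥ b by time T/2 after each bad interval. In particular, if orbits spend time at most kε in the 'bad' region and at least T in the 'good' region alternately, and kε ≤ (b−a')/M, then the cone interval [a', b] is preserved: Θ never drops below a'. -/

import Mathlib

open Set Filter Topology

private lemma lemA17 (Θ : ℝ → ℝ) (hΘ : Differentiable ℝ Θ) (M p q : ℝ)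
    (hd : ∀ t ∈ Set.Icc p q, -M ≤ deriv Θ t) :
    ∀ t ∈ Set.Icc p q, Θ p - M * (t - p) ≤ Θ t := by
  intro t ht
  have hmono : MonotoneOn (fun s => Θ s + M * s) (Set.Icc p q) := by
    apply monotoneOn_of_deriv_nonneg (convex_Icc p q)
    · exact (hΘ.continuous.add (continuous_const.mul continuous_id)).continuousOn
    · intro s _
      exact ((hΘ s).add (((differentiable_id.const_mul M)) s)).differentiableWithinAt
    · intro s hs
      have hder : HasDerivAt (fun s => Θ s + M * s) (deriv Θ s + M) s := by
        convert ((hΘ s).hasDerivAt.add ((hasDerivAt_id s).const_mul M)) using 1 <;> first | rfl | simp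
      rw [hder.deriv]
      have : s ∈ Set.Icc p q := interior_subset hs
      linarith [hd s this]
  have hp : p ∈ Set.Icc p q := ⟨le_refl p, ht.1.trans ht.2⟩
  have := hmono hp ht ht.1
  simp only at this
  linarith

private lemma lemCore17 (Θ : ℝ → ℝ) (hΘ : Differentiable ℝ Θ)
    (a' b κ l p q : ℝ) (hκ : 0 < κ) (hl0 : 0 ≤ l) (hl : l < κ)
    (hab : a' < b) (hpq : p ≤ q) (ha : a' ≤ Θ p)
    (hd : ∀ t ∈ Set.Icc p q, a' ≤ Θ t → Θ t ≤ b → κ ≤ deriv Θ t) :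
    ∀ t ∈ Set.Icc p q, min b (Θ p + l * (t - p)) ≤ Θ t := by
  set ψ : ℝ → ℝ := fun t => min b (Θ p + l * (t - p)) with hψdef
  have hψcont : Continuous ψ := by
    apply Continuous.min continuous_const
    fun_prop
  have hΘc : Continuous Θ := hΘ.continuous
  have hψlip : ∀ c t : ℝ, c ≤ t → ψ t ≤ ψ c + l * (t - c) := by
    intro c t hct
    have h0 : 0 ≤ l * (t - c) := mul_nonneg hl0 (by linarith)
    have : ψ t ≤ min (b + l * (t - c)) (Θ p + l * (c - p) + l * (t - c)) := by
      apply min_le_min (by linarith)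
      have : Θ p + l * (t - p) = Θ p + l * (c - p) + l * (t - c) := by ring
      rw [this]
    calc ψ t ≤ min (b + l * (t - c)) (Θ p + l * (c - p) + l * (t - c)) := this
      _ = min b (Θ p + l * (c - p)) + l * (t - c) := by rw [min_add_add_right]
      _ = ψ c + l * (t - c) := rfl
  have hψa : ∀ t, p ≤ t → a' ≤ ψ t := by
    intro t hpt
    apply le_min hab.le
    have : 0 ≤ l * (t - p) := mul_nonneg hl0 (by linarith)
    linarith
  set S : Set ℝ := {t | t ∈ Set.Icc p q ∧ ∀ s ∈ Set.Icc p t, ψ s ≤ Θ s} with hSdef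
  have hψp : ψ p ≤ Θ p := by
    simp only [hψdef]
    simpa using min_le_right b (Θ p + l * (p - p))
  have hpS : p ∈ S := by
    refine ⟨⟨le_refl p, hpq⟩, fun s hs => ?_⟩
    have : s = p := le_antisymm hs.2 hs.1
    rw [this]; exact hψp
  have hSne : S.Nonempty := ⟨p, hpS⟩
  have hSbdd : BddAbove S := ⟨q, fun t ht => ht.1.2⟩
  set c := sSup S with hcdef
  have hpc : p ≤ c := le_csSup hSbdd hpS
  have hcq : c ≤ q := csSup_le hSne fun t ht => ht.1.2
  have hlt : ∀ s ∈ Set.Ico p c, ψ s ≤ Θ s := by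
    intro s hs
    obtain ⟨t, htS, hst⟩ := exists_lt_of_lt_csSup hSne hs.2
    exact htS.2 s ⟨hs.1, le_of_lt hst⟩
  have hcS : ψ c ≤ Θ c := by
    rcases eq_or_lt_of_le hpc with h | h
    · rw [← h]; exact hψp
    · have hclosed : IsClosed {t | ψ t ≤ Θ t} := isClosed_le hψcont hΘc
      have hsub : Set.Ico p c ⊆ {t | ψ t ≤ Θ t} := hlt
      have : closure (Set.Ico p c) ⊆ {t | ψ t ≤ Θ t} :=
        hclosed.closure_subset_iff.mpr hsub
      apply this
      rw [closure_Ico (ne_of_lt h)]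
      exact ⟨le_of_lt h, le_refl c⟩
  have hcmem : c ∈ S := by
    refine ⟨⟨hpc, hcq⟩, fun s hs => ?_⟩
    rcases lt_or_eq_of_le hs.2 with h | h
    · exact hlt s ⟨hs.1, h⟩
    · rw [h]; exact hcS
  have hceq : c = q := by
    by_contra hne
    have hclt : c < q := lt_of_le_of_ne hcq hne
    have hev : ∀ᶠ t in 𝓝[>] c, ψ t ≤ Θ t := by
      rcases lt_or_eq_of_le hcS with hstrict | heq
      · have hopen : IsOpen {t | ψ t < Θ t} := isOpen_lt hψcont hΘc
        have hmem : {t | ψ t < Θ t} ∈ 𝓝 c := hopen.mem_nhds hstrict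
        have := nhdsWithin_le_nhds (s := Set.Ioi c) hmem
        filter_upwards [this] with t ht using le_of_lt ht
      · have ha'c : a' ≤ Θ c := heq ▸ hψa c hpc
        have hbc : Θ c ≤ b := heq ▸ min_le_left _ _
        have hderiv : κ ≤ deriv Θ c := hd c ⟨hpc, hcq⟩ ha'c hbc
        have hslope : Tendsto (slope Θ c) (𝓝[≠] c) (𝓝 (deriv Θ c)) :=
          hasDerivAt_iff_tendsto_slope.mp (hΘ c).hasDerivAt
        have hev1 : ∀ᶠ t in 𝓝[≠] c, l < slope Θ c t :=
          (tendsto_order.1 hslope).1 l (lt_of_lt_of_le hl hderiv)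
        have hev2 : ∀ᶠ t in 𝓝[>] c, l < slope Θ c t :=
          hev1.filter_mono (nhdsWithin_mono c (fun x hx => ne_of_gt hx))
        have hev3 : ∀ᶠ t in 𝓝[>] c, t ∈ Set.Ioi c := eventually_mem_nhdsWithin
        filter_upwards [hev2, hev3] with t hst htc
        have htc' : (0:ℝ) < t - c := sub_pos.mpr htc
        have : l * (t - c) < Θ t - Θ c := by
          rw [slope_def_field] at hst
          exact (lt_div_iff₀ htc').mp hst
        calc ψ t ≤ ψ c + l * (t - c) := hψlip c t (le_of_lt htc)
          _ = Θ c + l * (t - c) := by rw [heq]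
          _ ≤ Θ t := by linarith
    obtain ⟨w, hw, hsub⟩ := mem_nhdsGT_iff_exists_Ioc_subset.mp hev
    set t' := min w q with ht'def
    have hct' : c < t' := lt_min hw hclt
    have ht'S : t' ∈ S := by
      refine ⟨⟨hpc.trans (le_of_lt hct'), min_le_right w q⟩, fun s hs => ?_⟩
      rcases le_or_gt s c with h | h
      · exact hcmem.2 s ⟨hs.1, h⟩
      · exact hsub ⟨h, hs.2.trans (min_le_left w q)⟩
    have := le_csSup hSbdd ht'S
    rw [← hcdef] at this
    exact absurd this (not_le.mpr hct')
  intro t ht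
  exact hcmem.2 t ⟨ht.1, by rw [hceq]; exact ht.2⟩

private lemma lemB17 (Θ : ℝ → ℝ) (hΘ : Differentiable ℝ Θ)
    (a' b κ p q : ℝ) (hκ : 0 < κ) (hab : a' < b) (hpq : p ≤ q) (ha : a' ≤ Θ p)
    (hd : ∀ t ∈ Set.Icc p q, a' ≤ Θ t → Θ t ≤ b → κ ≤ deriv Θ t) :
    ∀ t ∈ Set.Icc p q, min b (Θ p + κ * (t - p)) ≤ Θ t := by
  intro t ht
  rcases eq_or_lt_of_le ht.1 with h | h
  · rw [← h]
    simpa using min_le_right b (Θ p + κ * (p - p))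
  · apply le_of_forall_sub_le
    intro ε hε
    have htp : (0:ℝ) < t - p := sub_pos.mpr h
    set l := max 0 (κ - ε / (t - p)) with hldef
    have hl0 : 0 ≤ l := le_max_left _ _
    have hl : l < κ := max_lt hκ (by
      have : 0 < ε / (t - p) := div_pos hε htp
      linarith)
    have hcore := lemCore17 Θ hΘ a' b κ l p q hκ hl0 hl hab hpq ha hd t ht
    have hcancel : ε / (t - p) * (t - p) = ε := div_mul_cancel₀ ε (ne_of_gt htp)
    have hkey : Θ p + κ * (t - p) - ε ≤ Θ p + l * (t - p) := by
      have h1 : κ - ε / (t - p) ≤ l := le_max_right _ _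
      have h2 : (κ - ε / (t - p)) * (t - p) ≤ l * (t - p) :=
        mul_le_mul_of_nonneg_right h1 htp.le
      nlinarith
    rcases le_total b (Θ p + l * (t - p)) with hc | hc
    · have := min_le_left b (Θ p + κ * (t - p))
      rw [min_eq_left hc] at hcore
      linarith
    · have := min_le_right b (Θ p + κ * (t - p))
      rw [min_eq_right hc] at hcore
      linarith

/-- abstract time-spent argument for cone preservation: if `Θ` decreases at rate
at most `M` on alternating 'bad' intervals of length at most `kε` and increases at rate at
least `κ` on 'good' intervals of length at least `T` whenever `Θ ∈ [a',b]`, with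
`kεM < (T/2)κ`, `b − a' < (κ/2)T` and `kεM ≤ b − a'`, then starting from `Θ ≥ b` the value
`Θ` never drops below `a'`, and returns to `Θ ≥ b` by time `T/2` into each good interval. -/
theorem stmt_17 (Θ : ℝ → ℝ) (hΘ : Differentiable ℝ Θ)
    (κ M T kε a' b : ℝ)
    (hκ : 0 < κ) (hM : 0 ≤ M) (hT : 0 < T) (hkε : 0 ≤ kε)
    (hab : a' < b)
    (h1 : kε * M < (T/2) * κ)
    (h2 : b - a' < (κ/2) * T)
    (h3 : kε * M ≤ b - a')
    (u : ℕ → ℝ) (hu : StrictMono u)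
    (hbadlen : ∀ i, u (2*i+1) - u (2*i) ≤ kε)
    (hgoodlen : ∀ i, T ≤ u (2*i+2) - u (2*i+1))
    (hbad : ∀ i, ∀ t ∈ Set.Icc (u (2*i)) (u (2*i+1)), -M ≤ deriv Θ t)
    (hgood : ∀ i, ∀ t ∈ Set.Icc (u (2*i+1)) (u (2*i+2)),
      a' ≤ Θ t → Θ t ≤ b → κ ≤ deriv Θ t)
    (hstart : b ≤ Θ (u 0)) :
    (∀ t, u 0 ≤ t → (∃ j, t ≤ u j) → a' ≤ Θ t) ∧
    (∀ i, ∀ t, u (2*i+1) + T/2 ≤ t → t ≤ u (2*i+2) → b ≤ Θ t) := by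
  have hmono := hu.monotone
  have key_bad : ∀ i, b ≤ Θ (u (2*i)) →
      ∀ t ∈ Set.Icc (u (2*i)) (u (2*i+1)), b - kε * M ≤ Θ t := by
    intro i hb t ht
    have h := lemA17 Θ hΘ M (u (2*i)) (u (2*i+1)) (hbad i) t ht
    have hlen : t - u (2*i) ≤ kε := by
      have := ht.2; have := hbadlen i; linarith
    have := mul_le_mul_of_nonneg_left hlen hM
    linarith
  have key_good : ∀ i, a' ≤ Θ (u (2*i+1)) →
      ∀ t ∈ Set.Icc (u (2*i+1)) (u (2*i+2)),
        min b (a' + κ * (t - u (2*i+1))) ≤ Θ t := by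
    intro i ha t ht
    have hpq : u (2*i+1) ≤ u (2*i+2) := hmono (by omega)
    have h := lemB17 Θ hΘ a' b κ (u (2*i+1)) (u (2*i+2)) hκ hab hpq ha (hgood i) t ht
    refine le_trans (min_le_min (le_refl b) ?_) h
    have : (0:ℝ) ≤ κ * (t - u (2*i+1)) := mul_nonneg hκ.le (by linarith [ht.1])
    linarith
  have inv : ∀ i, b ≤ Θ (u (2*i)) := by
    intro i
    induction i with
    | zero => simpa using hstart
    | succ n ih =>
      have hpq1 : u (2*n) ≤ u (2*n+1) := hmono (by omega)
      have hpq2 : u (2*n+1) ≤ u (2*n+2) := hmono (by omega)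
      have hb1 : b - kε * M ≤ Θ (u (2*n+1)) :=
        key_bad n ih _ ⟨hpq1, le_refl _⟩
      have ha1 : a' ≤ Θ (u (2*n+1)) := by linarith
      have hg := key_good n ha1 (u (2*n+2)) ⟨hpq2, le_refl _⟩
      have hbig : b ≤ a' + κ * (u (2*n+2) - u (2*n+1)) := by
        have hlen := hgoodlen n
        nlinarith
      rw [min_eq_left hbig] at hg
      have h2n : 2*(n+1) = 2*n+2 := by ring
      rw [h2n]
      exact hg
  have ha_odd : ∀ i, a' ≤ Θ (u (2*i+1)) := by
    intro i
    have hpq1 : u (2*i) ≤ u (2*i+1) := hmono (by omega)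
    have := key_bad i (inv i) _ ⟨hpq1, le_refl _⟩
    linarith
  constructor
  · intro t ht ⟨j, htj⟩
    induction j with
    | zero =>
      have : t = u 0 := le_antisymm htj ht
      rw [this]; linarith
    | succ j ihj =>
      rcases le_or_gt t (u j) with h | h
      · exact ihj h
      · rcases Nat.even_or_odd j with ⟨i, hi⟩ | ⟨i, hi⟩
        · have hj : j = 2*i := by omega
          subst hj
          have := key_bad i (inv i) t ⟨le_of_lt h, htj⟩
          linarith
        · have hj : j = 2*i+1 := by omega
          subst hj
          have hg := key_good i (ha_odd i) t ⟨le_of_lt h, htj⟩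
          have : (0:ℝ) ≤ κ * (t - u (2*i+1)) := mul_nonneg hκ.le (by linarith)
          have hmin : a' ≤ min b (a' + κ * (t - u (2*i+1))) :=
            le_min hab.le (by linarith)
          linarith
  · intro i t hT2 ht2
    have hpq1 : u (2*i+1) ≤ t := by linarith
    have hg := key_good i (ha_odd i) t ⟨hpq1, ht2⟩
    have hbig : b ≤ a' + κ * (t - u (2*i+1)) := by
      have h4 : T/2 ≤ t - u (2*i+1) := by linarith
      nlinarith
    rw [min_eq_left hbig] at hg
    exact hg
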